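/- Let p ≥ 1 be an integer and let a_1,…,a_p be arbitrary reals. Then for every (β, β₀) ∈ ℝ^p × ℝ, G(β, β₀) ≥ p + 100p². -/
import Mathlib


/-- `θ(x, β₀) = (max{0, x + β₀} − 1)² + (max{0, −x + β₀} − 1)²`. -/
noncomputable def thetaFn (x β₀ : ℝ) : ℝ :=
  (max 0 (x + β₀) - 1) ^ 2 + (max 0 (-x + β₀) - 1) ^ 2

/-- The objective of the (ReLU) reduction instance. -/
noncomputable def reluObj {p : ℕ} (a : Fin p → ℝ) (β : Fin p → ℝ) (β₀ : ℝ) : ℝ :=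
  (max 0 (∑ i, a i * β i + β₀) - (1 / 2) * ∑ i, a i) ^ 2
  + (max 0 (2 * ∑ i, a i * β i + β₀) - ∑ i, a i) ^ 2
  + ∑ j, thetaFn (β j) β₀
  + (max 0 β₀ + 10 * p) ^ 2

lemma thetaFn_nonneg (x β₀ : ℝ) : 0 ≤ thetaFn x β₀ := by
  unfold thetaFn; positivity

lemma thetaFn_ge (x β₀ : ℝ) (h : max 0 β₀ ≤ 1) :
    (1 - max 0 β₀) ^ 2 ≤ thetaFn x β₀ := by
  unfold thetaFn
  rcases le_total x 0 with hx | hx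
  · have h1 : max 0 (x + β₀) ≤ max 0 β₀ := max_le_max le_rfl (by linarith)
    have h0 : 0 ≤ max 0 (x + β₀) := le_max_left _ _
    nlinarith [sq_nonneg (max 0 (-x + β₀) - 1)]
  · have h1 : max 0 (-x + β₀) ≤ max 0 β₀ := max_le_max le_rfl (by linarith)
    have h0 : 0 ≤ max 0 (-x + β₀) := le_max_left _ _
    nlinarith [sq_nonneg (max 0 (x + β₀) - 1)]

/-- for `p ≥ 1` and arbitrary reals `a₁,…,a_p`, every `(β, β₀)` satisfies
`G(β, β₀) ≥ p + 100 p²`. -/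
theorem reluObj_ge (p : ℕ) (hp : 1 ≤ p) (a : Fin p → ℝ)
    (β : Fin p → ℝ) (β₀ : ℝ) :
    reluObj a β β₀ ≥ (p : ℝ) + 100 * (p : ℝ) ^ 2 := by
  unfold reluObj
  set m := max 0 β₀ with hm
  have hm0 : 0 ≤ m := le_max_left _ _
  have hp1 : (1 : ℝ) ≤ p := by exact_mod_cast hp
  have hp0 : (0 : ℝ) ≤ p := by positivity
  have sq1 : (0:ℝ) ≤ (max 0 (∑ i, a i * β i + β₀) - (1 / 2) * ∑ i, a i) ^ 2 := sq_nonneg _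
  have sq2 : (0:ℝ) ≤ (max 0 (2 * ∑ i, a i * β i + β₀) - ∑ i, a i) ^ 2 := sq_nonneg _
  rcases le_total m 1 with h | h
  · have hsum : (p : ℝ) * (1 - m) ^ 2 ≤ ∑ j, thetaFn (β j) β₀ := by
      calc (p : ℝ) * (1 - m) ^ 2 = ∑ _j : Fin p, (1 - m) ^ 2 := by
            simp [Finset.sum_const, mul_comm]
        _ ≤ ∑ j, thetaFn (β j) β₀ :=
            Finset.sum_le_sum fun j _ => thetaFn_ge (β j) β₀ h
    nlinarith [sq_nonneg m, mul_nonneg (sub_nonneg.mpr hp1) (sq_nonneg m),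
      mul_nonneg (mul_nonneg (sub_nonneg.mpr hp1) hp0) hm0,
      mul_nonneg hp0 hm0]
  · have hsum : (0:ℝ) ≤ ∑ j, thetaFn (β j) β₀ :=
      Finset.sum_nonneg fun j _ => thetaFn_nonneg _ _
    nlinarith [mul_nonneg (sub_nonneg.mpr h) hp0, sq_nonneg ((p:ℝ) - 1)]
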